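/- arXiv:2302.09050 — 6 statements merged into one kernel-verified Lean document; each statement's English description precedes it below -/
import Mathlib

section
/- Let n, k be natural numbers and let F be a family of k-element subsets of {1,…,n} that is intersecting (any two members of F have nonempty intersection) and maximal with this property, i.e. every k-element subset E of {1,…,n} either belongs to F or is disjoint from some member of F. Then |F| ≥ C(n,k) / (C(n-k,k) + 1), where C(a,b) denotes the binomial coefficient. -/
/-- A maximal intersecting family of `k`-element subsets of `{1,…,n}` has at
least `C(n,k) / (C(n-k,k) + 1)` members. -/
theorem stmt_4 (n k : ℕ) (F : Finset (Finset (Fin n)))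
    (hcard : ∀ E ∈ F, E.card = k)
    (hint : ∀ A ∈ F, ∀ B ∈ F, (A ∩ B).Nonempty)
    (hmax : ∀ E : Finset (Fin n), E.card = k → E ∈ F ∨ ∃ A ∈ F, Disjoint E A) :
    (n.choose k : ℝ) / ((n - k).choose k + 1) ≤ F.card := by
  have hsub : (Finset.univ : Finset (Fin n)).powersetCard k ⊆
      F ∪ F.biUnion (fun A => Aᶜ.powersetCard k) := by
    intro E hE
    rw [Finset.mem_powersetCard] at hE
    rcases hmax E hE.2 with h | ⟨A, hA, hd⟩
    · exact Finset.mem_union_left _ h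
    · refine Finset.mem_union_right _ (Finset.mem_biUnion.2 ⟨A, hA, ?_⟩)
      rw [Finset.mem_powersetCard]
      exact ⟨le_compl_iff_disjoint_right.2 hd, hE.2⟩
  have hcount : n.choose k ≤ F.card * ((n - k).choose k + 1) := by
    have h1 := Finset.card_le_card hsub
    rw [Finset.card_powersetCard, Finset.card_univ, Fintype.card_fin] at h1
    have h2 := Finset.card_union_le F (F.biUnion (fun A => Aᶜ.powersetCard k))
    have h3 : (F.biUnion (fun A => Aᶜ.powersetCard k)).card ≤
        F.card * (n - k).choose k := by
      calc (F.biUnion (fun A => Aᶜ.powersetCard k)).card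
          ≤ ∑ A ∈ F, (Aᶜ.powersetCard k).card := Finset.card_biUnion_le
        _ = F.card * (n - k).choose k := by
            rw [Finset.sum_congr rfl (fun A hA => ?_), Finset.sum_const, smul_eq_mul]
            rw [Finset.card_powersetCard, Finset.card_compl, Fintype.card_fin,
              hcard A hA]
    calc n.choose k ≤ _ := h1
      _ ≤ F.card + F.card * (n - k).choose k := le_trans h2 (by omega)
      _ = F.card * ((n - k).choose k + 1) := by ring
  rw [div_le_iff₀ (by positivity)]
  calc (n.choose k : ℝ) ≤ (F.card * ((n - k).choose k + 1) : ℕ) := by exact_mod_cast hcount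
    _ = F.card * ((n - k).choose k + 1) := by push_cast; ring
end

section
/- For every real c with 0 < c < 1/2, one has −2·(1−c)·log(1−c) + (1−2c)·log(1−2c) > 0. -/
/-- For `0 < c < 1/2`, `p_N(c) - p_d(c) = -2(1-c)log(1-c) + (1-2c)log(1-2c) > 0`. -/
theorem stmt_6 (c : ℝ) (h0 : 0 < c) (h1 : c < 1 / 2) :
    0 < -2 * (1 - c) * Real.log (1 - c) + (1 - 2 * c) * Real.log (1 - 2 * c) := by
  have hc : StrictConvexOn ℝ (Set.Ici 0) (fun x : ℝ => x * Real.log x) :=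
    Real.strictConvexOn_mul_log
  have key := hc.2 (show (1 - 2*c : ℝ) ∈ Set.Ici 0 by simp; linarith)
    (show (1 : ℝ) ∈ Set.Ici 0 by norm_num)
    (show (1 - 2*c : ℝ) ≠ 1 by intro h; linarith [h])
    (show (0:ℝ) < 1/2 by norm_num) (show (0:ℝ) < 1/2 by norm_num) (by norm_num)
  simp only [smul_eq_mul, Real.log_one, mul_one, mul_zero] at key
  have h2 : (1/2 : ℝ) * (1 - 2*c) + 1/2 = 1 - c := by ring
  rw [h2] at key
  nlinarith [key]
end

section
/- Let g(x) = x·log(x) for x > 0. Fix real constants a > b > 0. Then the function n ↦ log C(⌊a·n⌋, ⌊b·n⌋) − (g(a) − g(b) − g(a−b))·n, defined for natural numbers n, is O(log n) as n → ∞. Here C(·,·) denotes the binomial coefficient and log the natural logarithm. -/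
open Asymptotics Filter

private lemma one_isBigO_log : (fun _ : ℕ => (1:ℝ)) =O[atTop] (fun n : ℕ => Real.log n) := by
  refine IsBigO.of_bound 1 ?_
  filter_upwards [eventually_ge_atTop 3] with n hn
  have hn3 : (3:ℝ) ≤ (n:ℝ) := by exact_mod_cast hn
  have h1 : (1:ℝ) ≤ Real.log n := by
    rw [Real.le_log_iff_exp_le (by linarith)]
    have := Real.exp_one_lt_d9
    linarith
  simp only [norm_one, Real.norm_eq_abs]
  rw [abs_of_nonneg (by linarith)]
  linarith

private lemma log_factorial_isBigO :
    (fun n : ℕ => Real.log n.factorial - ((n:ℝ) * Real.log n - n)) =O[atTop]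
      (fun n : ℕ => Real.log n) := by
  have hpi : (0:ℝ) < Real.sqrt Real.pi := Real.sqrt_pos.2 Real.pi_pos
  have h1 : Tendsto (fun n : ℕ => Real.log (Stirling.stirlingSeq n)) atTop
      (nhds (Real.log (Real.sqrt Real.pi))) :=
    ((Real.continuousAt_log hpi.ne').tendsto).comp Stirling.tendsto_stirlingSeq_sqrt_pi
  have h2 : (fun n : ℕ => Real.log (Stirling.stirlingSeq n)) =O[atTop]
      (fun n : ℕ => Real.log n) := (h1.isBigO_one ℝ).trans one_isBigO_log
  have h3 : (fun n : ℕ => 1/2 * Real.log (2*n)) =O[atTop] (fun n : ℕ => Real.log n) := by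
    refine IsBigO.of_bound 1 ?_
    filter_upwards [eventually_ge_atTop 2] with n hn
    have hn2 : (2:ℝ) ≤ (n:ℝ) := by exact_mod_cast hn
    have hlog : Real.log (2*n) ≤ 2 * Real.log n := by
      have : (2:ℝ) * n ≤ (n:ℝ)^2 := by nlinarith
      calc Real.log (2*n) ≤ Real.log ((n:ℝ)^2) := Real.log_le_log (by linarith) this
        _ = 2 * Real.log n := by rw [Real.log_pow]; push_cast; ring
    have hpos : 0 ≤ Real.log (2*n) := Real.log_nonneg (by linarith)
    have hln : 0 ≤ Real.log n := Real.log_nonneg (by linarith)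
    simp only [Real.norm_eq_abs, abs_of_nonneg hpos, abs_of_nonneg hln,
      abs_of_nonneg (by positivity : (0:ℝ) ≤ 1/2 * Real.log (2*n))]
    linarith
  have key : ∀ᶠ n : ℕ in atTop, Real.log (Stirling.stirlingSeq n) + 1/2 * Real.log (2*n)
      = Real.log n.factorial - ((n:ℝ) * Real.log n - n) := by
    filter_upwards [eventually_ge_atTop 1] with n hn
    have hn0 : (0:ℝ) < n := by exact_mod_cast hn
    rw [Stirling.log_stirlingSeq_formula, Real.log_div hn0.ne' (Real.exp_ne_zero 1),
      Real.log_exp]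
    ring
  exact (h2.add h3).congr' key EventuallyEq.rfl

private lemma xlogx_mono {x y : ℝ} (hy : 1 ≤ y) (hxy : y ≤ x) :
    y * Real.log y ≤ x * Real.log x := by
  have hx : 1 ≤ x := hy.trans hxy
  have := Real.log_le_log (by linarith : (0:ℝ) < y) hxy
  nlinarith [Real.log_nonneg hy, Real.log_nonneg hx]

private lemma xlogx_diff {x y : ℝ} (hy : 1 ≤ y) (hxy : y ≤ x) :
    x * Real.log x - y * Real.log y ≤ (x - y) * (Real.log x + 1) := by
  have hy0 : (0:ℝ) < y := by linarith
  have hx0 : (0:ℝ) < x := by linarith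
  have h1 : Real.log x - Real.log y ≤ (x - y)/y := by
    rw [← Real.log_div hx0.ne' hy0.ne']
    have := Real.log_le_sub_one_of_pos (show (0:ℝ) < x/y by positivity)
    calc Real.log (x/y) ≤ x/y - 1 := this
      _ = (x - y)/y := by field_simp
  have h2 : y * (Real.log x - Real.log y) ≤ x - y := by
    have := mul_le_mul_of_nonneg_left h1 hy0.le
    rwa [mul_div_cancel₀ _ hy0.ne'] at this
  have hid : x * Real.log x - y * Real.log y
      = (x - y) * Real.log x + y * (Real.log x - Real.log y) := by ring
  have hid2 : (x - y) * (Real.log x + 1) = (x - y) * Real.log x + (x - y) := by ring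
  rw [hid, hid2]
  linarith

private lemma floor_stirling (c : ℝ) (hc : 0 < c) (m : ℕ → ℕ)
    (hm : ∀ᶠ n : ℕ in atTop, |(m n : ℝ) - c * n| ≤ 2) :
    (fun n : ℕ => Real.log (m n).factorial
        - (c * Real.log c * n + c * n * Real.log n - c * n))
      =O[atTop] (fun n : ℕ => Real.log n) := by
  -- m n → ∞
  have hmt : Tendsto m atTop atTop := by
    rw [← tendsto_natCast_atTop_iff (R := ℝ)]
    have hcn : Tendsto (fun n : ℕ => c * n - 2) atTop atTop :=
      (tendsto_natCast_atTop_atTop.const_mul_atTop hc).atTop_add tendsto_const_nhds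
    refine tendsto_atTop_mono' atTop ?_ hcn
    filter_upwards [hm] with n hn
    have := abs_le.1 hn
    linarith [this.2]
  -- T1
  have T1 : (fun n : ℕ => Real.log (m n).factorial
      - ((m n : ℝ) * Real.log (m n) - (m n))) =O[atTop] (fun n : ℕ => Real.log (m n)) :=
    log_factorial_isBigO.comp_tendsto hmt
  have hlogm : (fun n : ℕ => Real.log (m n)) =O[atTop] (fun n : ℕ => Real.log n) := by
    refine IsBigO.of_bound 2 ?_
    filter_upwards [hm, eventually_ge_atTop (max 3 (⌈c⌉₊ + 2))] with n hn hN
    have hn3 : (3:ℝ) ≤ (n:ℝ) := by exact_mod_cast (le_max_left _ _).trans hN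
    have hnc : c + 2 ≤ (n:ℝ) := by
      have : (⌈c⌉₊ + 2 : ℕ) ≤ n := (le_max_right _ _).trans hN
      have h2 : ((⌈c⌉₊ : ℝ) + 2) ≤ (n:ℝ) := by exact_mod_cast this
      linarith [Nat.le_ceil c]
    have hub : (m n : ℝ) ≤ c * n + 2 := by linarith [(abs_le.1 hn).2]
    have hsq : c * n + 2 ≤ (n:ℝ)^2 := by nlinarith
    have hlog2 : Real.log (m n) ≤ 2 * Real.log n := by
      rcases Nat.eq_zero_or_pos (m n) with hz | hz
      · have : Real.log (m n) = 0 := by simp [hz]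
        rw [this]; positivity
      · have hpos : (0:ℝ) < (m n : ℝ) := by exact_mod_cast hz
        calc Real.log (m n) ≤ Real.log ((n:ℝ)^2) := Real.log_le_log hpos (by linarith)
          _ = 2 * Real.log n := by rw [Real.log_pow]; push_cast; ring
    have h0 : (0:ℝ) ≤ Real.log (m n) := by
      rcases le_or_gt (m n : ℝ) 1 with h | h
      · rcases Nat.eq_zero_or_pos (m n) with h0 | h0
        · simp [h0]
        · have : (1:ℝ) ≤ (m n : ℝ) := by exact_mod_cast h0
          exact Real.log_nonneg this
      · exact Real.log_nonneg h.le
    have hln : 0 ≤ Real.log n := Real.log_nonneg (by linarith)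
    simp only [Real.norm_eq_abs, abs_of_nonneg h0, abs_of_nonneg hln]
    linarith
  have T1' : (fun n : ℕ => Real.log (m n).factorial
      - ((m n : ℝ) * Real.log (m n) - (m n))) =O[atTop] (fun n : ℕ => Real.log n) :=
    T1.trans hlogm
  -- T2
  have T2 : (fun n : ℕ => ((m n : ℝ) * Real.log (m n) - (m n))
      - (c * n * Real.log (c * n) - c * n)) =O[atTop] (fun n : ℕ => Real.log n) := by
    refine IsBigO.of_bound 10 ?_
    have hev4 : ∀ᶠ n : ℕ in atTop, (4:ℝ) ≤ c * n := by
      have : Tendsto (fun n : ℕ => c * n) atTop atTop :=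
        tendsto_natCast_atTop_atTop.const_mul_atTop hc
      exact this.eventually_ge_atTop 4
    filter_upwards [hm, hev4, eventually_ge_atTop (max 3 (⌈c⌉₊ + 2))] with n hn h4 hN
    have hn3 : (3:ℝ) ≤ (n:ℝ) := by exact_mod_cast (le_max_left _ _).trans hN
    have hnc : c + 2 ≤ (n:ℝ) := by
      have : (⌈c⌉₊ + 2 : ℕ) ≤ n := (le_max_right _ _).trans hN
      have h2 : ((⌈c⌉₊ : ℝ) + 2) ≤ (n:ℝ) := by exact_mod_cast this
      linarith [Nat.le_ceil c]
    set x := c * (n:ℝ) with hx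
    set y := (m n : ℝ) with hyd
    have hy1 : (1:ℝ) ≤ y := by linarith [(abs_le.1 hn).1]
    have hx1 : (1:ℝ) ≤ x := by linarith
    have hyx : y ≤ x + 2 := by linarith [(abs_le.1 hn).2]
    have hxy : x ≤ y + 2 := by linarith [(abs_le.1 hn).1]
    have hsq : x + 2 ≤ (n:ℝ)^2 := by rw [hx]; nlinarith
    have hln1 : (1:ℝ) ≤ Real.log n := by
      rw [Real.le_log_iff_exp_le (by linarith)]
      have := Real.exp_one_lt_d9
      linarith
    have hkey : |y * Real.log y - x * Real.log x| ≤ 2 * (2 * Real.log n + 1) := by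
      have hbound : ∀ u v : ℝ, 1 ≤ v → v ≤ u → u ≤ (n:ℝ)^2 → u - v ≤ 2 →
          u * Real.log u - v * Real.log v ≤ 2 * (2 * Real.log n + 1) := by
        intro u v hv huv hun huv2
        have h1 := xlogx_diff hv huv
        have hlogu : Real.log u ≤ 2 * Real.log n := by
          calc Real.log u ≤ Real.log ((n:ℝ)^2) := Real.log_le_log (by linarith : (0:ℝ) < u) hun
            _ = 2 * Real.log n := by rw [Real.log_pow]; push_cast; ring
        have hlu0 : 0 ≤ Real.log u := Real.log_nonneg (hv.trans huv)
        calc u * Real.log u - v * Real.log v ≤ (u - v) * (Real.log u + 1) := h1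
          _ ≤ 2 * (Real.log u + 1) := by
              apply mul_le_mul_of_nonneg_right huv2 (by linarith)
          _ ≤ 2 * (2 * Real.log n + 1) := by linarith
      rcases le_total y x with h | h
      · rw [abs_sub_comm, abs_of_nonneg (by linarith [xlogx_mono hy1 h])]
        exact hbound x y hy1 h (by linarith) (by linarith)
      · rw [abs_of_nonneg (by linarith [xlogx_mono hx1 h])]
        exact hbound y x hx1 h (by linarith) (by linarith)
    have habs : |y * Real.log y - y - (x * Real.log x - x)| ≤ 4 * Real.log n + 4 := by
      have : |y * Real.log y - y - (x * Real.log x - x)|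
          ≤ |y * Real.log y - x * Real.log x| + |x - y| := by
        have : y * Real.log y - y - (x * Real.log x - x)
            = (y * Real.log y - x * Real.log x) + (x - y) := by ring
        rw [this]
        exact abs_add_le _ _
      have hxy2 : |x - y| ≤ 2 := by rw [abs_sub_comm]; exact hn
      linarith
    simp only [Real.norm_eq_abs]
    rw [abs_of_nonneg (by linarith : (0:ℝ) ≤ Real.log n)]
    calc |y * Real.log y - y - (x * Real.log x - x)| ≤ 4 * Real.log n + 4 := habs
      _ ≤ 10 * Real.log n := by linarith
  have key : ∀ᶠ n : ℕ in atTop,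
      (Real.log (m n).factorial - ((m n : ℝ) * Real.log (m n) - (m n)))
        + (((m n : ℝ) * Real.log (m n) - (m n)) - (c * n * Real.log (c * n) - c * n))
      = Real.log (m n).factorial - (c * Real.log c * n + c * n * Real.log n - c * n) := by
    filter_upwards [eventually_ge_atTop 1] with n hn
    have hn0 : (0:ℝ) < n := by exact_mod_cast hn
    rw [Real.log_mul hc.ne' hn0.ne']
    ring
  exact (T1'.add T2).congr' key EventuallyEq.rfl

/-- Stirling-type estimate: with `g(x) = x log x` and constants `a > b > 0`,
`log C(⌊an⌋, ⌊bn⌋) = (g(a) - g(b) - g(a-b)) n + O(log n)` as `n → ∞`. -/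
theorem stmt_8 (a b : ℝ) (hb : 0 < b) (hab : b < a) :
    (fun n : ℕ => Real.log ((Nat.floor (a * n)).choose (Nat.floor (b * n)))
        - (a * Real.log a - b * Real.log b - (a - b) * Real.log (a - b)) * n)
      =O[atTop] (fun n : ℕ => Real.log n) := by
  have ha : 0 < a := hb.trans hab
  have hd : 0 < a - b := by linarith
  set m : ℕ → ℕ := fun n => Nat.floor (a * n) with hm
  set k : ℕ → ℕ := fun n => Nat.floor (b * n) with hk
  set d : ℕ → ℕ := fun n => m n - k n with hdd
  have hkm : ∀ n : ℕ, k n ≤ m n := fun n =>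
    Nat.floor_le_floor (by nlinarith [Nat.cast_nonneg (α := ℝ) n] : b * n ≤ a * n)
  have hfloor : ∀ (c : ℝ), 0 < c → ∀ n : ℕ, |(Nat.floor (c * n) : ℝ) - c * n| ≤ 1 := by
    intro c hc n
    have h0 : (0:ℝ) ≤ c * n := by positivity
    have h1 : (Nat.floor (c * n) : ℝ) ≤ c * n := Nat.floor_le h0
    have h2 : c * n < (Nat.floor (c * n) : ℝ) + 1 := Nat.lt_floor_add_one _
    rw [abs_le]; constructor <;> linarith
  have hma : ∀ᶠ n : ℕ in atTop, |(m n : ℝ) - a * n| ≤ 2 :=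
    Eventually.of_forall fun n => (hfloor a ha n).trans (by norm_num)
  have hkb : ∀ᶠ n : ℕ in atTop, |(k n : ℝ) - b * n| ≤ 2 :=
    Eventually.of_forall fun n => (hfloor b hb n).trans (by norm_num)
  have hdc : ∀ᶠ n : ℕ in atTop, |(d n : ℝ) - (a - b) * n| ≤ 2 := by
    refine Eventually.of_forall fun n => ?_
    have hcast : (d n : ℝ) = (m n : ℝ) - (k n : ℝ) := by
      rw [hdd]; exact_mod_cast Nat.cast_sub (hkm n)
    have h1 := hfloor a ha n
    have h2 := hfloor b hb n
    rw [hcast]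
    have : (m n : ℝ) - (k n : ℝ) - (a - b) * n
        = ((m n : ℝ) - a * n) - ((k n : ℝ) - b * n) := by ring
    rw [this]
    calc |((m n : ℝ) - a * n) - ((k n : ℝ) - b * n)|
        ≤ |(m n : ℝ) - a * n| + |(k n : ℝ) - b * n| := abs_sub _ _
      _ ≤ 2 := by linarith
  have Ta := floor_stirling a ha m hma
  have Tb := floor_stirling b hb k hkb
  have Td := floor_stirling (a - b) hd d hdc
  have key : ∀ᶠ n : ℕ in atTop,
      (Real.log (m n).factorial - (a * Real.log a * n + a * n * Real.log n - a * n))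
        - (Real.log (k n).factorial - (b * Real.log b * n + b * n * Real.log n - b * n))
        - (Real.log (d n).factorial
            - ((a-b) * Real.log (a-b) * n + (a-b) * n * Real.log n - (a-b) * n))
      = Real.log ((m n).choose (k n))
          - (a * Real.log a - b * Real.log b - (a - b) * Real.log (a - b)) * n := by
    refine Eventually.of_forall fun n => ?_
    have hfact : ((m n).choose (k n) : ℝ) * (k n).factorial * (d n).factorial
        = (m n).factorial := by
      exact_mod_cast congrArg (Nat.cast (R := ℝ))
        (Nat.choose_mul_factorial_mul_factorial (hkm n))
    have hc0 : (0:ℝ) < ((m n).choose (k n) : ℝ) := by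
      exact_mod_cast Nat.choose_pos (hkm n)
    have hk0 : (0:ℝ) < ((k n).factorial : ℝ) := by exact_mod_cast (k n).factorial_pos
    have hd0 : (0:ℝ) < ((d n).factorial : ℝ) := by exact_mod_cast (d n).factorial_pos
    have hlog : Real.log (m n).factorial
        = Real.log ((m n).choose (k n)) + Real.log (k n).factorial
          + Real.log (d n).factorial := by
      rw [← hfact, Real.log_mul (by positivity) hd0.ne', Real.log_mul hc0.ne' hk0.ne']
    rw [hlog]; ring
  exact ((Ta.sub Tb).sub Td).congr' key EventuallyEq.rfl
end

section
/- For every real c with 0 < c < 1/2 there exist a real ε > 0 and a natural number n₀ such that for all n ≥ n₀, setting k = ⌊c·n⌋, N = C(n,k) and d = C(n−k,k), one has N^ε ≤ d ≤ N^{1−ε}. -/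
lemma aux_choose_le_two_pow (n k : ℕ) : n.choose k ≤ 2 ^ n := by
  rcases le_or_gt k n with h | h
  · calc n.choose k ≤ ∑ m ∈ Finset.range (n+1), n.choose m :=
        Finset.single_le_sum (f := fun m => n.choose m) (fun _ _ => Nat.zero_le _)
          (Finset.mem_range.mpr (by omega))
      _ = 2 ^ n := Nat.sum_range_choose n
  · simp [Nat.choose_eq_zero_of_lt h]

lemma aux_step (k m : ℕ) (q : ℝ) (hq : 0 ≤ q) (hk : k ≤ m)
    (h : q * ((m : ℝ) + 1 - k) ≤ (m : ℝ) + 1) :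
    q * (m.choose k) ≤ ((m + 1).choose k) := by
  have hid := Nat.choose_mul_succ_eq m k
  have hid' : (m.choose k : ℝ) * ((m : ℝ) + 1) = ((m+1).choose k : ℝ) * ((m : ℝ) + 1 - k) := by
    have : ((m + 1 - k : ℕ) : ℝ) = (m : ℝ) + 1 - k := by
      push_cast [Nat.cast_sub (by omega : k ≤ m + 1)]; ring
    have := congrArg (Nat.cast : ℕ → ℝ) hid
    push_cast at this ⊢
    rw [this]
    rw [Nat.cast_sub (by omega : k ≤ m + 1)] at *
    push_cast
    ring
  have hpos : (0:ℝ) < (m : ℝ) + 1 := by positivity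
  have hc : (0:ℝ) ≤ ((m+1).choose k : ℝ) := by positivity
  rw [← mul_le_mul_iff_of_pos_right hpos]
  calc q * (m.choose k) * ((m:ℝ)+1) = q * (((m+1).choose k : ℝ) * ((m : ℝ) + 1 - k)) := by
        rw [mul_assoc, hid']
    _ = ((m+1).choose k : ℝ) * (q * ((m : ℝ) + 1 - k)) := by ring
    _ ≤ ((m+1).choose k : ℝ) * ((m:ℝ)+1) := by
        exact mul_le_mul_of_nonneg_left h hc

lemma aux_iter (k a : ℕ) (q : ℝ) (hq : 1 ≤ q) (hk : k ≤ a) (j : ℕ)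
    (h : ∀ m : ℕ, a ≤ m → m < a + j → q * ((m : ℝ) + 1 - k) ≤ (m : ℝ) + 1) :
    q ^ j * (a.choose k) ≤ ((a + j).choose k) := by
  induction j with
  | zero => simp
  | succ j ih =>
    have hstep := aux_step k (a + j) q (by linarith) (by omega)
      (h (a + j) (by omega) (by omega))
    have ih' := ih (fun m hm hm' => h m hm (by omega))
    calc q ^ (j+1) * (a.choose k) = q * (q ^ j * (a.choose k)) := by ring
      _ ≤ q * ((a + j).choose k) := by
          apply mul_le_mul_of_nonneg_left ih' (by linarith)
      _ ≤ ((a + (j+1)).choose k) := by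
          have : a + (j + 1) = (a + j) + 1 := by omega
          rw [this]
          push_cast at hstep ⊢
          exact hstep

/-- For `0 < c < 1/2` there is an `ε > 0` such that for all large `n`, setting
`k = ⌊cn⌋`, `N = C(n,k)` (number of vertices of the Kneser graph `K(n,k)`) and
`d = C(n-k,k)` (its degree), one has `N^ε ≤ d ≤ N^{1-ε}`. -/
theorem stmt_9 (c : ℝ) (hc0 : 0 < c) (hc : c < 1 / 2) :
    ∃ ε : ℝ, 0 < ε ∧ ∃ n₀ : ℕ, ∀ n : ℕ, n₀ ≤ n →
      ((n.choose ⌊c * n⌋₊ : ℝ) ^ ε ≤ ((n - ⌊c * n⌋₊).choose ⌊c * n⌋₊ : ℝ) ∧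
        ((n - ⌊c * n⌋₊).choose ⌊c * n⌋₊ : ℝ) ≤ (n.choose ⌊c * n⌋₊ : ℝ) ^ (1 - ε)) := by
  set q : ℝ := 1 + c / 2 with hqdef
  have hq1 : 1 < q := by simp [hqdef]; linarith
  have hlogq : 0 < Real.log q := Real.log_pos hq1
  have hlog2 : 0 < Real.log 2 := Real.log_pos (by norm_num)
  set t : ℝ := min (1 - 2*c) (c/2) with htdef
  have ht0 : 0 < t := lt_min (by linarith) (by linarith)
  refine ⟨t * Real.log q / Real.log 2, by positivity, ⌈2/c⌉₊ + 1, fun n hn => ?_⟩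
  set ε : ℝ := t * Real.log q / Real.log 2 with hεdef
  set k : ℕ := ⌊c * n⌋₊ with hkdef
  have hn1 : 1 ≤ n := by omega
  have hnn : ⌈2/c⌉₊ ≤ n := by omega
  have hnR : (2:ℝ)/c ≤ n :=
    le_trans (Nat.le_ceil _) (Nat.cast_le.mpr hnn)
  have hcn2 : (2:ℝ) ≤ c * n := by
    rw [div_le_iff₀ hc0] at hnR; linarith [hnR]
  have hkub : (k : ℝ) ≤ c * n := Nat.floor_le (by positivity)
  have hklb : c * n - 1 ≤ (k : ℝ) := by
    have := Nat.lt_floor_add_one (c * n); linarith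
  have hklb2 : c * n / 2 ≤ (k : ℝ) := by linarith
  have hnpos : (0:ℝ) < n := by exact_mod_cast hn1
  have h2kn : 2 * k < n := by
    have h : ((2 * k : ℕ) : ℝ) < (n : ℝ) := by push_cast; nlinarith
    exact_mod_cast h
  have hkn : k ≤ n - k := by omega
  have hknn : k ≤ n := by omega
  have hcond : ∀ m : ℕ, m + 1 ≤ n → q * ((m : ℝ) + 1 - k) ≤ (m : ℝ) + 1 := by
    intro m hm
    have hm' : (m : ℝ) + 1 ≤ n := by exact_mod_cast hm
    have hk0 : (0:ℝ) ≤ k := Nat.cast_nonneg k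
    rw [hqdef]; nlinarith
  -- lower bound on d
  have hd_lb : q ^ (n - 2*k) ≤ (((n-k).choose k : ℕ) : ℝ) := by
    have h := aux_iter k k q (le_of_lt hq1) le_rfl (n - 2*k)
      (fun m hm hm' => hcond m (by omega))
    rw [Nat.choose_self] at h
    have : k + (n - 2*k) = n - k := by omega
    rw [this] at h
    simpa using h
  -- N ≥ q^k * d
  have hN_lb : q ^ k * (((n-k).choose k : ℕ) : ℝ) ≤ ((n.choose k : ℕ) : ℝ) := by
    have h := aux_iter k (n-k) q (le_of_lt hq1) hkn k
      (fun m hm hm' => hcond m (by omega))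
    have : n - k + k = n := by omega
    rwa [this] at h
  have hN2 : ((n.choose k : ℕ) : ℝ) ≤ 2 ^ n := by
    exact_mod_cast Nat.cast_le.mpr (aux_choose_le_two_pow n k)
  have hd1 : (1:ℝ) ≤ (((n-k).choose k : ℕ) : ℝ) := by
    exact_mod_cast Nat.one_le_iff_ne_zero.mpr (Nat.choose_pos hkn).ne'
  have hN1 : (1:ℝ) ≤ ((n.choose k : ℕ) : ℝ) := by
    exact_mod_cast Nat.one_le_iff_ne_zero.mpr (Nat.choose_pos hknn).ne'
  have hε0 : 0 < ε := by rw [hεdef]; positivity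
  -- N^ε ≤ q^(t*n)
  have key : ((n.choose k : ℕ) : ℝ) ^ ε ≤ q ^ (t * n) := by
    calc ((n.choose k : ℕ) : ℝ) ^ ε ≤ ((2:ℝ) ^ n) ^ ε :=
          Real.rpow_le_rpow (by linarith) hN2 (le_of_lt hε0)
      _ = (2:ℝ) ^ ((n:ℝ) * ε) := by
          rw [← Real.rpow_natCast 2 n, ← Real.rpow_mul (by norm_num)]
      _ = q ^ (t * n) := by
          rw [Real.rpow_def_of_pos (by norm_num : (0:ℝ) < 2),
            Real.rpow_def_of_pos (by linarith : (0:ℝ) < q)]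
          congr 1
          rw [hεdef]
          field_simp
  constructor
  · -- lower bound
    calc ((n.choose k : ℕ) : ℝ) ^ ε ≤ q ^ (t * n) := key
      _ ≤ q ^ (((n - 2*k : ℕ):ℕ) : ℝ) := by
          apply Real.rpow_le_rpow_of_exponent_le (le_of_lt hq1)
          have hcast : (((n - 2*k : ℕ):ℕ) : ℝ) = (n:ℝ) - 2*k := by
            push_cast [Nat.cast_sub (by omega : 2*k ≤ n)]; ring
          rw [hcast]
          have h1 : t ≤ 1 - 2*c := min_le_left _ _
          have h2 : t * n ≤ (1 - 2*c) * n :=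
            mul_le_mul_of_nonneg_right h1 (le_of_lt hnpos)
          calc t * n ≤ (1 - 2*c) * n := h2
            _ ≤ (n:ℝ) - 2*k := by nlinarith
      _ = q ^ (n - 2*k) := Real.rpow_natCast q (n - 2*k)
      _ ≤ (((n-k).choose k : ℕ) : ℝ) := hd_lb
  · -- upper bound
    have hNε : ((n.choose k : ℕ) : ℝ) ^ ε ≤ q ^ k := by
      calc ((n.choose k : ℕ) : ℝ) ^ ε ≤ q ^ (t * n) := key
        _ ≤ q ^ ((k:ℕ) : ℝ) := by
            apply Real.rpow_le_rpow_of_exponent_le (le_of_lt hq1)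
            have h1 : t ≤ c/2 := min_le_right _ _
            have h2 : t * n ≤ (c/2) * n := by
              apply mul_le_mul_of_nonneg_right h1 (le_of_lt hnpos)
            calc t * n ≤ (c/2) * n := h2
              _ ≤ ((k:ℕ) : ℝ) := by push_cast; linarith
        _ = q ^ k := Real.rpow_natCast q k
    have hNpos : (0:ℝ) < ((n.choose k : ℕ) : ℝ) := by linarith
    have hεpos : (0:ℝ) < ((n.choose k : ℕ) : ℝ) ^ ε := Real.rpow_pos_of_pos hNpos ε
    have : (((n-k).choose k : ℕ) : ℝ) * ((n.choose k : ℕ) : ℝ) ^ ε ≤ ((n.choose k : ℕ) : ℝ) := by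
      calc (((n-k).choose k : ℕ) : ℝ) * ((n.choose k : ℕ) : ℝ) ^ ε
          ≤ (((n-k).choose k : ℕ) : ℝ) * q ^ k := by
            apply mul_le_mul_of_nonneg_left hNε (by linarith)
        _ = q ^ k * (((n-k).choose k : ℕ) : ℝ) := by ring
        _ ≤ ((n.choose k : ℕ) : ℝ) := hN_lb
    rw [Real.rpow_sub hNpos, Real.rpow_one, le_div_iff₀ hεpos]
    exact this
end

section
/- For every real c with 0 < c < 1/2 there exist a real ε > 0 and a natural number n₀ such that for all n ≥ n₀ the following holds with k = ⌊c·n⌋, N = C(n,k) and d = C(n−k,k): for every k-element subset S of {1,…,n}, the number of k-element subsets S' of {1,…,n} for which the number of k-element subsets T with T ∩ S = ∅ and T ∩ S' = ∅ exceeds d·N^{−ε} is at most d·N^{−ε}. -/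
set_option maxHeartbeats 1000000

open Finset Real

-- (m)^k ≤ C(m,k) * k^k
lemma auxA : ∀ (k m : ℕ), k ≤ m → (m:ℝ)^k ≤ m.choose k * (k:ℝ)^k := by
  intro k
  induction k with
  | zero => intro m _; simp
  | succ k ih =>
    intro m hm
    have hm1 : 1 ≤ m := le_trans (Nat.succ_le_succ (Nat.zero_le _)) hm
    have hkm : k ≤ m - 1 := by omega
    have hid : (m : ℝ) * ((m-1 : ℕ).choose k : ℝ) = (m.choose (k+1) : ℝ) * (k+1) := by
      have := Nat.add_one_mul_choose_eq (m-1) k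
      have h1 : m - 1 + 1 = m := by omega
      rw [h1] at this
      exact_mod_cast congrArg (Nat.cast (R := ℝ)) this
    have hkk : (0:ℝ) < (k:ℝ)^k := by
      rcases Nat.eq_zero_or_pos k with h | h
      · simp [h]
      · positivity
    -- key: m^(k+1) * k^k ≤ C(m,k+1)*(k+1)^(k+1) * k^k
    have hbase : (m:ℝ) * (k:ℝ) ≤ ((m:ℝ) - 1) * ((k:ℝ)+1) := by
      have : (k:ℝ) + 1 ≤ m := by exact_mod_cast hm
      nlinarith
    have h2 : ((m:ℝ) * k)^k ≤ (((m:ℝ)-1) * (k+1))^k := by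
      apply pow_le_pow_left₀ (by positivity) hbase
    have hih := ih (m-1) hkm
    have hcast : ((m-1:ℕ):ℝ) = (m:ℝ) - 1 := by
      push_cast [Nat.cast_sub hm1]; ring
    rw [hcast] at hih
    have key : (m:ℝ)^(k+1) * (k:ℝ)^k ≤ (m.choose (k+1) : ℝ) * ((k:ℝ)+1)^(k+1) * (k:ℝ)^k := by
      have c1 : (m:ℝ)^(k+1) * (k:ℝ)^k = (m:ℝ) * ((m:ℝ)*k)^k := by
        rw [mul_pow]; ring
      have c2 : (m.choose (k+1) : ℝ) * ((k:ℝ)+1)^(k+1) * (k:ℝ)^k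
          = (m:ℝ) * (((m-1:ℕ).choose k : ℝ) * ((k:ℝ)+1)^k * (k:ℝ)^k) := by
        rw [pow_succ]
        rw [show (m.choose (k+1) : ℝ) * (((k:ℝ)+1)^k * ((k:ℝ)+1)) * (k:ℝ)^k
            = ((m.choose (k+1) : ℝ) * ((k:ℝ)+1)) * ((k:ℝ)+1)^k * (k:ℝ)^k by ring, ← hid]
        ring
      rw [c1, c2]
      apply mul_le_mul_of_nonneg_left _ (by positivity)
      calc ((m:ℝ)*k)^k ≤ (((m:ℝ)-1) * ((k:ℝ)+1))^k := h2
        _ = ((m:ℝ)-1)^k * ((k:ℝ)+1)^k := mul_pow _ _ _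
        _ ≤ (((m-1:ℕ).choose k : ℝ) * (k:ℝ)^k) * ((k:ℝ)+1)^k := by
            apply mul_le_mul_of_nonneg_right hih (by positivity)
        _ = ((m-1:ℕ).choose k : ℝ) * ((k:ℝ)+1)^k * (k:ℝ)^k := by ring
    have := (mul_le_mul_iff_left₀ hkk).mp key
    calc (m:ℝ)^(k+1) ≤ (m.choose (k+1) : ℝ) * ((k:ℝ)+1)^(k+1) := this
      _ = (m.choose (k+1) : ℝ) * ((k+1:ℕ):ℝ)^(k+1) := by norm_num

lemma auxB : ∀ (t : ℕ), (t:ℝ)^t ≤ 3^t * (t.factorial : ℝ) := by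
  intro t
  induction t with
  | zero => simp
  | succ t ih =>
    have hstep : ((t:ℝ)+1)^t ≤ 3 * (t:ℝ)^t := by
      rcases Nat.eq_zero_or_pos t with h | h
      · subst h; norm_num
      · have ht : (0:ℝ) < t := by exact_mod_cast h
        have h1 : ((t:ℝ)+1)^t = (t:ℝ)^t * (1 + 1/t)^t := by
          rw [← mul_pow]; congr 1; field_simp
        have h2 : (1 + 1/(t:ℝ))^t ≤ Real.exp (1/t) ^ t := by
          apply pow_le_pow_left₀ (by positivity)
          linarith [Real.add_one_le_exp (1/(t:ℝ))]
        have h3 : Real.exp (1/(t:ℝ)) ^ t = Real.exp 1 := by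
          rw [← Real.exp_nat_mul]; congr 1; field_simp
        have h4 : Real.exp 1 ≤ 3 := by
          linarith [Real.exp_one_lt_d9]
        calc ((t:ℝ)+1)^t = (t:ℝ)^t * (1 + 1/t)^t := h1
          _ ≤ (t:ℝ)^t * 3 := by
              apply mul_le_mul_of_nonneg_left _ (by positivity)
              calc (1 + 1/(t:ℝ))^t ≤ Real.exp (1/t) ^ t := h2
                _ = Real.exp 1 := h3
                _ ≤ 3 := h4
          _ = 3 * (t:ℝ)^t := by ring
    have hfac : ((t+1:ℕ).factorial : ℝ) = ((t:ℝ)+1) * (t.factorial : ℝ) := by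
      rw [Nat.factorial_succ]; push_cast; ring
    push_cast
    calc ((t:ℝ)+1)^(t+1) = ((t:ℝ)+1) * ((t:ℝ)+1)^t := by ring
      _ ≤ ((t:ℝ)+1) * (3 * (t:ℝ)^t) := by
          apply mul_le_mul_of_nonneg_left hstep (by positivity)
      _ ≤ ((t:ℝ)+1) * (3 * (3^t * (t.factorial:ℝ))) := by
          apply mul_le_mul_of_nonneg_left (by apply mul_le_mul_of_nonneg_left ih (by norm_num)) (by positivity)
      _ = 3^(t+1) * (((t:ℝ)+1) * (t.factorial:ℝ)) := by ring
      _ = 3^(t+1) * ((t+1:ℕ).factorial : ℝ) := by rw [hfac]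

lemma auxC (k K : ℕ) (ρ : ℝ) (h0 : 0 ≤ ρ)
    (hcond : ∀ m : ℕ, m < K → ((m:ℝ)+1) - k ≤ ρ * ((m:ℝ)+1)) :
    ∀ i, i ≤ K → (((K-i).choose k : ℕ) : ℝ) ≤ (K.choose k : ℝ) * ρ^i := by
  intro i
  induction i with
  | zero => simp
  | succ i ih =>
    intro hiK
    have hi : i ≤ K := by omega
    have hIH := ih hi
    set m := K - i - 1 with hm
    have hm1 : m + 1 = K - i := by omega
    have hmK : m < K := by omega
    -- C(m,k) ≤ ρ * C(m+1,k)
    have hid : ((m.choose k : ℕ):ℝ) * ((m:ℝ)+1) = (((m+1).choose k : ℕ):ℝ) * (((m+1-k : ℕ):ℕ):ℝ) := by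
      exact_mod_cast congrArg (Nat.cast (R := ℝ)) (Nat.choose_mul_succ_eq m k)
    have hsub : (((m+1-k : ℕ):ℕ):ℝ) ≤ ρ * ((m:ℝ)+1) := by
      rcases le_or_gt k (m+1) with h | h
      · rw [Nat.cast_sub h]
        push_cast
        linarith [hcond m hmK]
      · have : m+1-k = 0 := by omega
        rw [this]
        have : (0:ℝ) ≤ ρ * ((m:ℝ)+1) := by positivity
        simpa using this
    have hstep : ((m.choose k : ℕ):ℝ) ≤ ρ * (((m+1).choose k : ℕ):ℝ) := by
      have hpos : (0:ℝ) < (m:ℝ)+1 := by positivity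
      rw [← mul_le_mul_iff_left₀ hpos, hid]
      calc (((m+1).choose k : ℕ):ℝ) * (((m+1-k : ℕ):ℕ):ℝ)
          ≤ (((m+1).choose k : ℕ):ℝ) * (ρ * ((m:ℝ)+1)) := by
            apply mul_le_mul_of_nonneg_left hsub (by positivity)
        _ = ρ * (((m+1).choose k : ℕ):ℝ) * ((m:ℝ)+1) := by ring
    have hKi : K - (i+1) = m := by omega
    rw [hKi]
    calc ((m.choose k : ℕ):ℝ) ≤ ρ * (((m+1).choose k : ℕ):ℝ) := hstep
      _ = ρ * (((K-i).choose k : ℕ):ℝ) := by rw [hm1]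
      _ ≤ ρ * ((K.choose k : ℝ) * ρ^i) := by
          apply mul_le_mul_of_nonneg_left hIH h0
      _ = (K.choose k : ℝ) * ρ^(i+1) := by ring

lemma auxD (n : ℕ) : ∀ (t : ℕ), 2*t ≤ n → ∀ i, i ≤ t → n.choose i ≤ n.choose t := by
  intro t
  induction t with
  | zero => intro _ i hi; interval_cases i; rfl
  | succ t ih =>
    intro hn i hi
    rcases Nat.eq_or_lt_of_le hi with h | h
    · rw [h]
    · have hi' : i ≤ t := by omega
      have h1 : n.choose i ≤ n.choose t := ih (by omega) i hi'
      have h2 : n.choose t ≤ n.choose (t+1) := by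
        apply Nat.choose_le_succ_of_lt_half_left
        omega
      omega

lemma auxE (x : ℝ) (hx : 0 < x) : Real.log x ≤ 2 * Real.sqrt x := by
  have h1 : Real.log (Real.sqrt x) ≤ Real.sqrt x - 1 :=
    Real.log_le_sub_one_of_pos (Real.sqrt_pos.mpr hx)
  rw [Real.log_sqrt hx.le] at h1
  linarith [Real.sqrt_nonneg x]

/-- For `0 < c < 1/2` there is `ε > 0` such that for all large `n`, with
`k = ⌊cn⌋`, `N = C(n,k)`, `d = C(n-k,k)`: every `k`-set `S` has codegree (in the
Kneser graph `K(n,k)`) larger than `d·N^{-ε}` with at most `d·N^{-ε}` of the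
`k`-sets `S'`. -/
theorem stmt_12 (c : ℝ) (hc0 : 0 < c) (hc : c < 1 / 2) :
    ∃ ε : ℝ, 0 < ε ∧ ∃ n₀ : ℕ, ∀ n : ℕ, n₀ ≤ n →
      ∀ S : Finset (Fin n), S.card = ⌊c * n⌋₊ →
        ((((Finset.univ : Finset (Fin n)).powersetCard ⌊c * n⌋₊).filter
            (fun S' : Finset (Fin n) =>
              (((((Finset.univ : Finset (Fin n)).powersetCard ⌊c * n⌋₊).filter
                  (fun T => T ∩ S = ∅ ∧ T ∩ S' = ∅)).card : ℝ)
                > ((n - ⌊c * n⌋₊).choose ⌊c * n⌋₊ : ℝ) *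
                    (n.choose ⌊c * n⌋₊ : ℝ) ^ (-ε)))).card : ℝ)
          ≤ ((n - ⌊c * n⌋₊).choose ⌊c * n⌋₊ : ℝ) *
              (n.choose ⌊c * n⌋₊ : ℝ) ^ (-ε) := by
  have hc2 : (0:ℝ) < 1 - c/2 := by linarith
  have hc2' : 1 - c/2 < 1 := by linarith
  set L : ℝ := -Real.log (1 - c/2) with hLdef
  have hL0 : 0 < L := by
    have := Real.log_neg hc2 hc2'
    simp only [hLdef]; linarith
  have hL1 : L ≤ 1 := by
    have h := Real.log_le_sub_one_of_pos (show (0:ℝ) < (1-c/2)⁻¹ by positivity)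
    rw [Real.log_inv] at h
    have h2 : (1-c/2)⁻¹ ≤ 4/3 := by
      rw [inv_le_comm₀ hc2 (by norm_num)]
      linarith
    simp only [hLdef]; linarith
  have hr1 : 1 < (1-c)/c := by rw [lt_div_iff₀ hc0]; linarith
  set R : ℝ := Real.log ((1-c)/c) with hRdef
  have hR0 : 0 < R := Real.log_pos hr1
  have hc1 : c ≤ 1 := by linarith
  have hRle : R ≤ 2 * Real.sqrt (1/c) := by
    calc R ≤ 2 * Real.sqrt ((1-c)/c) := auxE _ (by positivity)
      _ ≤ 2 * Real.sqrt (1/c) := by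
          gcongr
          linarith
  have hR2 : c * R^2 ≤ 4 := by
    have hs : Real.sqrt (1/c) ^ 2 = 1/c := Real.sq_sqrt (by positivity)
    have hR2' : R^2 ≤ (2 * Real.sqrt (1/c))^2 := pow_le_pow_left₀ hR0.le hRle 2
    have hsq : (2 * Real.sqrt (1/c))^2 = 4 * (1/c) := by rw [mul_pow, hs]; ring
    have h44 : c * (4 * (1/c)) = 4 := by field_simp
    calc c * R^2 ≤ c * (4 * (1/c)) := by
          apply mul_le_mul_of_nonneg_left _ hc0.le
          rw [← hsq]; exact hR2'
      _ = 4 := h44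
  set u : ℝ := c^2 * R^2 / 1024 with hudef
  have hu0 : 0 < u := by positivity
  have huc : u ≤ c/256 := by
    have h' : c * (c * R^2) ≤ c * 4 := mul_le_mul_of_nonneg_left hR2 hc0.le
    have he : u = c * (c * R^2) / 1024 := by simp only [hudef]; ring
    rw [he]; linarith
  have hu1 : u ≤ 1 := le_trans huc (by linarith)
  have hsqrtu : Real.sqrt u = c*R/32 := by
    have h : u = (c*R/32)^2 := by simp only [hudef]; ring
    rw [h, Real.sqrt_sq (by positivity)]
  have hcR : c * R ≤ 2 := by
    have h1 : c * Real.sqrt (1/c) = Real.sqrt c := by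
      rw [one_div, Real.sqrt_inv]
      rw [show c * (Real.sqrt c)⁻¹ = (Real.sqrt c * Real.sqrt c) * (Real.sqrt c)⁻¹ by
        rw [Real.mul_self_sqrt hc0.le]]
      field_simp
    have h2 : Real.sqrt c ≤ 1 := by
      rw [show (1:ℝ) = Real.sqrt 1 by simp]
      exact Real.sqrt_le_sqrt hc1
    have h3 : c * R ≤ c * (2 * Real.sqrt (1/c)) := mul_le_mul_of_nonneg_left hRle hc0.le
    have h4 : c * (2 * Real.sqrt (1/c)) = 2 * (c * Real.sqrt (1/c)) := by ring
    rw [h4, h1] at h3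
    linarith
  have huR : u ≤ c/4 * R := by
    have hx0 : (0:ℝ) ≤ c*R := (mul_pos hc0 hR0).le
    have hxx : (c*R)*(c*R) ≤ 2*(c*R) := mul_le_mul_of_nonneg_right hcR hx0
    have he : u = (c*R)*(c*R)/1024 := by simp only [hudef]; ring
    rw [he]; linarith
  set ε : ℝ := u * L / Real.log 2 with hedef
  have hlog2 : 0 < Real.log 2 := Real.log_pos (by norm_num)
  have hε0 : 0 < ε := by positivity
  refine ⟨ε, hε0, ?_⟩
  have hcu : 0 < c - 2*u := by linarith
  have hev : ∀ᶠ (n:ℕ) in Filter.atTop,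
      ((1:ℕ) ≤ n ∧ 2 ≤ c*(n:ℝ) ∧ 2 ≤ (1-2*c)*(n:ℝ) ∧ 2 ≤ u*(n:ℝ)) ∧
      (3 ≤ (c-2*u)*(n:ℝ) ∧ (16/(c*R))^2 ≤ (n:ℝ) ∧
        2*Real.log (3/u) + R ≤ (c/4)*R*(n:ℝ)) := by
    have ht : Filter.Tendsto (fun n:ℕ => (n:ℝ)) Filter.atTop Filter.atTop :=
      tendsto_natCast_atTop_atTop
    have h12c : (0:ℝ) < 1 - 2*c := by linarith
    have hc4R : (0:ℝ) < c/4*R := by positivity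
    filter_upwards [Filter.eventually_ge_atTop 1,
      (ht.const_mul_atTop hc0).eventually_ge_atTop 2,
      (ht.const_mul_atTop h12c).eventually_ge_atTop 2,
      (ht.const_mul_atTop hu0).eventually_ge_atTop 2,
      (ht.const_mul_atTop hcu).eventually_ge_atTop 3,
      ht.eventually_ge_atTop ((16/(c*R))^2),
      (ht.const_mul_atTop hc4R).eventually_ge_atTop (2*Real.log (3/u) + R)]
      with n e1 e2 e3 e4 e5 e6 e7
    exact ⟨⟨e1, e2, e3, e4⟩, e5, e6, e7⟩
  obtain ⟨n₀, hn₀⟩ := Filter.eventually_atTop.mp hev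
  refine ⟨n₀, ?_⟩
  intro n hn S hS
  obtain ⟨⟨h1, h2, h3, h4⟩, h5, h6a, h6b⟩ := hn₀ n hn
  set k := ⌊c * (n:ℝ)⌋₊ with hkdef
  set K := n - k with hKdef
  set D := K.choose k with hDdef
  set N := n.choose k with hNdef
  have hn1 : (1:ℝ) ≤ (n:ℝ) := by exact_mod_cast h1
  have hcn0 : 0 ≤ c * (n:ℝ) := by positivity
  have hkle : (k:ℝ) ≤ c*(n:ℝ) := Nat.floor_le hcn0
  have hkgt : c*(n:ℝ) - 1 < (k:ℝ) := by
    have := Nat.lt_floor_add_one (c*(n:ℝ)); linarith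
  have hk1 : 1 ≤ k := by
    have : (1:ℝ) ≤ (k:ℝ) := by linarith
    exact_mod_cast this
  have h2kn : 2*k + 2 ≤ n := by
    have : 2*(k:ℝ) + 2 ≤ (n:ℝ) := by linarith
    exact_mod_cast this
  have hkn : k ≤ n := by omega
  have hkK : k ≤ K := by omega
  have hKn : K ≤ n := by omega
  have hKcast : (K:ℝ) = (n:ℝ) - (k:ℝ) := by
    simp only [hKdef]; push_cast [Nat.cast_sub hkn]; ring
  set t := ⌈u * (n:ℝ)⌉₊ with htdef
  have htge : u*(n:ℝ) ≤ (t:ℝ) := Nat.le_ceil _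
  have htle : (t:ℝ) ≤ u*(n:ℝ) + 1 := (Nat.ceil_lt_add_one (by positivity)).le
  have ht2 : 2 ≤ t := by
    have : (2:ℝ) ≤ (t:ℝ) := le_trans h4 htge
    exact_mod_cast this
  have h2tk : 2*t ≤ k := by
    have hr : 2*(t:ℝ) < (k:ℝ) := by
      have h5' : (c-2*u)*(n:ℝ) ≥ 3 := h5
      have hexp : (c-2*u)*(n:ℝ) = c*(n:ℝ) - 2*(u*(n:ℝ)) := by ring
      rw [hexp] at h5'
      linarith
    have : 2*t < k := by exact_mod_cast hr
    omega
  have h2tn : 2*t ≤ n := by omega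
  have hDpos : 0 < D := Nat.choose_pos hkK
  have hNpos : 0 < N := Nat.choose_pos hkn
  have hD0 : (0:ℝ) < (D:ℝ) := by exact_mod_cast hDpos
  have hN0 : (0:ℝ) < (N:ℝ) := by exact_mod_cast hNpos
  have hNle : N ≤ 2^n := by
    rw [← Nat.sum_range_choose n]
    exact Finset.single_le_sum (f := fun i => n.choose i)
      (fun _ _ => Nat.zero_le _) (Finset.mem_range.mpr (by omega))
  have hlogN : Real.log N ≤ (n:ℝ) * Real.log 2 := by
    calc Real.log N ≤ Real.log ((2:ℝ)^n) := by
          apply Real.log_le_log hN0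
          exact_mod_cast hNle
      _ = (n:ℝ) * Real.log 2 := by rw [Real.log_pow]
  -- codegree formula
  have hcode : ∀ S' : Finset (Fin n),
      ((Finset.univ.powersetCard k).filter
        (fun T => T ∩ S = ∅ ∧ T ∩ S' = ∅)).card = ((S ∪ S')ᶜ.card).choose k := by
    intro S'
    have hset : (Finset.univ.powersetCard k).filter
        (fun T : Finset (Fin n) => T ∩ S = ∅ ∧ T ∩ S' = ∅)
        = (S ∪ S')ᶜ.powersetCard k := by
      ext T
      simp only [Finset.mem_filter, Finset.mem_powersetCard, Finset.subset_univ, true_and,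
        ← Finset.disjoint_iff_inter_eq_empty, ← le_compl_iff_disjoint_right,
        Finset.compl_union, Finset.le_iff_subset, Finset.subset_inter_iff]
      tauto
    rw [hset, Finset.card_powersetCard]
  set B := ((Finset.univ : Finset (Fin n)).powersetCard k).filter
      (fun S' : Finset (Fin n) =>
        (((((Finset.univ : Finset (Fin n)).powersetCard k).filter
            (fun T => T ∩ S = ∅ ∧ T ∩ S' = ∅)).card : ℝ)
          > (D : ℝ) * (N : ℝ) ^ (-ε))) with hBdef
  -- step 2 : bad S' have small difference
  have hBsub : ∀ S' ∈ B, (S' \ S).card ≤ t := by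
    intro S' hS'
    obtain ⟨hS'mem, hgt⟩ := Finset.mem_filter.mp hS'
    have hS'card : S'.card = k := (Finset.mem_powersetCard.mp hS'mem).2
    set i := (S' \ S).card with hidef
    have hik : i ≤ k := by
      have := Finset.card_le_card (Finset.sdiff_subset (s := S') (t := S))
      omega
    have hiK : i ≤ K := by omega
    have hunion : (S ∪ S').card = k + i := by
      rw [← Finset.union_sdiff_self_eq_union, Finset.card_union_of_disjoint Finset.disjoint_sdiff,
        hS]
    have hcompl : (S ∪ S')ᶜ.card = K - i := by
      rw [Finset.card_compl, Fintype.card_fin, hunion]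
      omega
    rw [hcode S', hcompl] at hgt
    have hdecay : (((K-i).choose k : ℕ) : ℝ) ≤ (K.choose k : ℝ) * (1 - c/2)^i := by
      apply auxC k K (1 - c/2) (by linarith only [hc]) _ i hiK
      intro m hm
      have hm' : (m:ℝ) + 1 ≤ (n:ℝ) := by
        have hmn : m + 1 ≤ n := by omega
        exact_mod_cast hmn
      have hp : c*((m:ℝ)+1) ≤ c*(n:ℝ) := mul_le_mul_of_nonneg_left hm' hc0.le
      nlinarith only [hp, hkgt, h2, hc0]
    have hgt2 : (D:ℝ) * (N:ℝ)^(-ε) < (D:ℝ) * (1 - c/2)^i :=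
      lt_of_lt_of_le hgt hdecay
    have hρ : (N:ℝ)^(-ε) < (1 - c/2)^i := (mul_lt_mul_iff_right₀ hD0).mp hgt2
    have hlog := Real.log_lt_log (Real.rpow_pos_of_pos hN0 _) hρ
    rw [Real.log_rpow hN0, Real.log_pow] at hlog
    have hlogρ : Real.log (1 - c/2) = -L := by simp [hLdef]
    rw [hlogρ] at hlog
    have hiL : (i:ℝ) * L < ε * Real.log N := by linarith only [hlog, hL0]
    have h' : (i:ℝ) * L < ε * ((n:ℝ) * Real.log 2) :=
      lt_of_lt_of_le hiL (mul_le_mul_of_nonneg_left hlogN hε0.le)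
    have heq : ε * ((n:ℝ) * Real.log 2) = u*(n:ℝ)*L := by
      simp only [hedef]; field_simp
    rw [heq] at h'
    have hiun : (i:ℝ) < u * (n:ℝ) := by
      have := (mul_lt_mul_iff_left₀ hL0).mp h'
      exact this
    have : (i:ℝ) < (t:ℝ) := lt_of_lt_of_le hiun htge
    have : i < t := by exact_mod_cast this
    omega
  -- step 3 : cardinality bound
  have hBcard : B.card ≤ (t+1) * (n.choose t)^2 := by
    have hinj : B.card ≤ ((Finset.range (t+1)).biUnion
        (fun i => (S.powersetCard i) ×ˢ ((Sᶜ).powersetCard i))).card := by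
      apply Finset.card_le_card_of_injOn (fun S' => (S \ S', S' \ S))
      · intro S' hS'
        have hS'mem := (Finset.mem_filter.mp hS').1
        have hS'card : S'.card = k := (Finset.mem_powersetCard.mp hS'mem).2
        have hit := hBsub S' hS'
        have hcard2 : (S \ S').card = (S' \ S).card := by
          have a1 := Finset.card_sdiff_add_card_inter S S'
          have a2 := Finset.card_sdiff_add_card_inter S' S
          rw [Finset.inter_comm] at a2
          omega
        rw [Finset.mem_coe, Finset.mem_biUnion]
        refine ⟨(S' \ S).card, Finset.mem_range.mpr (by omega), ?_⟩
        rw [Finset.mem_product]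
        constructor
        · exact Finset.mem_powersetCard.mpr ⟨Finset.sdiff_subset, hcard2⟩
        · refine Finset.mem_powersetCard.mpr ⟨?_, rfl⟩
          intro x hx
          rw [Finset.mem_compl]
          exact (Finset.mem_sdiff.mp hx).2
      · intro S1 hS1 S2 hS2 heq
        have e1 : S \ S1 = S \ S2 := congrArg Prod.fst heq
        have e2 : S1 \ S = S2 \ S := congrArg Prod.snd heq
        ext x
        by_cases hx : x ∈ S
        · have b1 := Finset.ext_iff.mp e1 x
          simp only [Finset.mem_sdiff, hx, true_and] at b1
          tauto
        · have b2 := Finset.ext_iff.mp e2 x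
          simp only [Finset.mem_sdiff, hx, and_true] at b2
          tauto
    calc B.card ≤ _ := hinj
      _ ≤ ∑ i ∈ Finset.range (t+1), ((S.powersetCard i) ×ˢ ((Sᶜ).powersetCard i)).card :=
          Finset.card_biUnion_le
      _ ≤ ∑ _i ∈ Finset.range (t+1), (n.choose t)^2 := by
          apply Finset.sum_le_sum
          intro i hi
          have hit : i ≤ t := by
            have := Finset.mem_range.mp hi; omega
          rw [Finset.card_product, Finset.card_powersetCard, Finset.card_powersetCard,
            Finset.card_compl, Fintype.card_fin, hS]
          calc k.choose i * (n-k).choose i ≤ n.choose i * n.choose i :=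
                Nat.mul_le_mul (Nat.choose_mono i hkn) (Nat.choose_mono i hKn)
            _ ≤ n.choose t * n.choose t :=
                Nat.mul_le_mul (auxD n t h2tn i hit) (auxD n t h2tn i hit)
            _ = (n.choose t)^2 := (sq _).symm
      _ = (t+1) * (n.choose t)^2 := by
          rw [Finset.sum_const, Finset.card_range, smul_eq_mul]
  -- real bounds
  have ht0 : (0:ℝ) < (t:ℝ) := by
    have : (0:ℕ) < t := by omega
    exact_mod_cast this
  have hC3u : ((n.choose t : ℕ):ℝ) ≤ (3/u)^t := by
    have b1 : ((n.choose t : ℕ):ℝ) ≤ (n:ℝ)^t / (t.factorial : ℝ) :=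
      Nat.choose_le_pow_div t n
    have hfacpos : (0:ℝ) < (t.factorial : ℝ) := by exact_mod_cast t.factorial_pos
    have b2 : (n:ℝ)^t / (t.factorial : ℝ) ≤ (3*(n:ℝ)/t)^t := by
      rw [div_pow, div_le_div_iff₀ hfacpos (by positivity)]
      have := auxB t
      have hnt : (0:ℝ) ≤ (n:ℝ)^t := by positivity
      calc (n:ℝ)^t * (t:ℝ)^t ≤ (n:ℝ)^t * (3^t * (t.factorial:ℝ)) := by
            apply mul_le_mul_of_nonneg_left this hnt
        _ = (3*(n:ℝ))^t * (t.factorial:ℝ) := by rw [mul_pow]; ring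
    have b3 : (3*(n:ℝ)/t)^t ≤ (3/u)^t := by
      apply pow_le_pow_left₀ (by positivity)
      rw [div_le_div_iff₀ ht0 hu0]
      have : u * (n:ℝ) ≤ (t:ℝ) := htge
      nlinarith only [this, hu0, ht0]
    linarith only [b1, b2, b3]
  set E := Real.log ((t:ℝ)+1) + 2*(t:ℝ)*Real.log (3/u) with hEdef
  have hexp1 : ((t:ℝ)+1) * ((3/u)^t)^2 = Real.exp E := by
    rw [hEdef, Real.exp_add, Real.exp_log (by positivity)]
    congr 1
    have : (2*(t:ℝ))*Real.log (3/u) = ((2*t : ℕ):ℝ) * Real.log (3/u) := by push_cast; ring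
    rw [this, Real.exp_nat_mul, Real.exp_log (by positivity), ← pow_mul, mul_comm t 2]
  have hlog3u : 0 ≤ Real.log (3/u) := by
    apply Real.log_nonneg
    rw [le_div_iff₀ hu0]; linarith only [hu1]
  have hE1 : Real.log ((t:ℝ)+1) ≤ 4 * Real.sqrt n := by
    have hb : (t:ℝ)+1 ≤ 3*(n:ℝ) := by
      have : u*(n:ℝ) ≤ 1*(n:ℝ) := mul_le_mul_of_nonneg_right hu1 (by positivity)
      linarith only [this, htle, hn1]
    have hs4 : Real.sqrt (4*(n:ℝ)) = 2 * Real.sqrt n := by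
      rw [show (4:ℝ)*(n:ℝ) = 2^2 * n by ring, Real.sqrt_mul (by positivity),
        Real.sqrt_sq (by norm_num)]
    calc Real.log ((t:ℝ)+1) ≤ Real.log (3*(n:ℝ)) := Real.log_le_log (by positivity) hb
      _ ≤ 2 * Real.sqrt (3*(n:ℝ)) := auxE _ (by positivity)
      _ ≤ 2 * Real.sqrt (4*(n:ℝ)) := by
          gcongr
          linarith only [hn1]
      _ = 4 * Real.sqrt n := by rw [hs4]; ring
  have hE2 : 2*(t:ℝ)*Real.log (3/u) ≤ (c/4)*R*(n:ℝ) + 2*Real.log (3/u) := by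
    have l1 : Real.log (3/u) ≤ 4 / Real.sqrt u := by
      have hsq : Real.sqrt (3/u) ≤ 2 / Real.sqrt u := by
        have h34 : (3:ℝ)/u ≤ 4/u := by gcongr <;> norm_num
        calc Real.sqrt (3/u) ≤ Real.sqrt (4/u) := Real.sqrt_le_sqrt h34
          _ = Real.sqrt 4 / Real.sqrt u := Real.sqrt_div (by norm_num) u
          _ = 2 / Real.sqrt u := by
              rw [show (4:ℝ) = 2^2 by norm_num, Real.sqrt_sq (by norm_num)]
      calc Real.log (3/u) ≤ 2 * Real.sqrt (3/u) := auxE _ (by positivity)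
        _ ≤ 2 * (2 / Real.sqrt u) := by gcongr
        _ = 4 / Real.sqrt u := by ring
    have hsu0 : 0 < Real.sqrt u := Real.sqrt_pos.mpr hu0
    have l4 : u * (4 / Real.sqrt u) = 4 * Real.sqrt u := by
      rw [show u * (4 / Real.sqrt u) = 4 * (u / Real.sqrt u) by ring, Real.div_sqrt]
    have l3 : 2*(u*(n:ℝ))*Real.log (3/u) ≤ 2*(n:ℝ)*(4*Real.sqrt u) := by
      calc 2*(u*(n:ℝ))*Real.log (3/u) ≤ 2*(u*(n:ℝ))*(4 / Real.sqrt u) := by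
            apply mul_le_mul_of_nonneg_left l1 (by positivity)
        _ = 2*(n:ℝ)*(u * (4 / Real.sqrt u)) := by ring
        _ = 2*(n:ℝ)*(4*Real.sqrt u) := by rw [l4]
    have l5 : 2*(n:ℝ)*(4*Real.sqrt u) ≤ (c/4)*R*(n:ℝ) := by
      rw [hsqrtu]
      apply le_of_eq; ring
    have l2 : 2*(t:ℝ)*Real.log (3/u) ≤ 2*(u*(n:ℝ)+1)*Real.log (3/u) := by
      apply mul_le_mul_of_nonneg_right _ hlog3u
      linarith only [htle]
    linarith only [l2, l3, l5, hlog3u]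
  have h6a' : 4*Real.sqrt (n:ℝ) ≤ (c/4)*R*(n:ℝ) := by
    have hs : 16/(c*R) ≤ Real.sqrt n := by
      rw [show (16/(c*R)) = Real.sqrt ((16/(c*R))^2) from (Real.sqrt_sq (by positivity)).symm]
      exact Real.sqrt_le_sqrt h6a
    have hnn : Real.sqrt (n:ℝ) * Real.sqrt (n:ℝ) = (n:ℝ) := Real.mul_self_sqrt (by positivity)
    have key : (4:ℝ) ≤ (c/4)*R*Real.sqrt n := by
      have h16 : (c/4)*R*(16/(c*R)) = 4 := by field_simp; ring
      calc (4:ℝ) = (c/4)*R*(16/(c*R)) := h16.symm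
        _ ≤ (c/4)*R*Real.sqrt n := by
            apply mul_le_mul_of_nonneg_left hs (by positivity)
    calc 4*Real.sqrt (n:ℝ) ≤ ((c/4)*R*Real.sqrt n)*Real.sqrt n :=
          mul_le_mul_of_nonneg_right key (Real.sqrt_nonneg _)
      _ = (c/4)*R*(n:ℝ) := by rw [mul_assoc, hnn]
  have hEbound : E ≤ (3*c/4)*R*(n:ℝ) - R := by
    rw [hEdef]
    linarith only [hE1, hE2, h6a', h6b]
  -- lower bound on D * N^(-ε)
  have hDge : Real.exp ((k:ℝ)*R) ≤ (D:ℝ) := by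
    have e1 : Real.exp ((k:ℝ)*R) = ((1-c)/c)^k := by
      rw [Real.exp_nat_mul, Real.exp_log (by positivity)]
    have hk0 : (0:ℝ) < (k:ℝ) := by
      have : (0:ℕ) < k := hk1
      exact_mod_cast this
    have e2 : ((1-c)/c)^k ≤ ((K:ℝ)/(k:ℝ))^k := by
      apply pow_le_pow_left₀ (by positivity)
      rw [div_le_div_iff₀ hc0 hk0, hKcast]
      nlinarith only [hkle, hc0, hc, hk0]
    have e3 : ((K:ℝ)/(k:ℝ))^k ≤ (D:ℝ) := by
      have := auxA k K hkK
      rw [div_pow, div_le_iff₀ (by positivity : (0:ℝ) < (k:ℝ)^k)]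
      exact this
    linarith only [e1 ▸ le_trans e2 e3]
  have hNge : (N:ℝ)^(-ε) = Real.exp (-(ε * Real.log N)) := by
    rw [Real.rpow_def_of_pos hN0]; ring_nf
  have hfinal2 : Real.exp ((3*c/4)*R*(n:ℝ) - R) ≤ (D:ℝ) * (N:ℝ)^(-ε) := by
    have hexple : (3*c/4)*R*(n:ℝ) - R ≤ (k:ℝ)*R - ε * Real.log N := by
      have p1 : (c*(n:ℝ)-1)*R ≤ (k:ℝ)*R := by
        apply mul_le_mul_of_nonneg_right hkgt.le hR0.le
      have p2 : ε * Real.log N ≤ (c/4)*R*(n:ℝ) := by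
        have q1 : ε * Real.log N ≤ ε * ((n:ℝ) * Real.log 2) :=
          mul_le_mul_of_nonneg_left hlogN hε0.le
        have q2 : ε * ((n:ℝ) * Real.log 2) = u*(n:ℝ)*L := by
          simp only [hedef]; field_simp
        have q3 : u*(n:ℝ)*L ≤ u*(n:ℝ) := by
          have := mul_le_mul_of_nonneg_left hL1 (show (0:ℝ) ≤ u*(n:ℝ) by positivity)
          linarith only [this]
        have q4 : u*(n:ℝ) ≤ (c/4)*R*(n:ℝ) := by
          have := mul_le_mul_of_nonneg_right huR (show (0:ℝ) ≤ (n:ℝ) by positivity)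
          linarith only [this]
        linarith only [q2 ▸ q1, q3, q4]
      nlinarith only [p1, p2, hR0]
    calc Real.exp ((3*c/4)*R*(n:ℝ) - R) ≤ Real.exp ((k:ℝ)*R - ε * Real.log N) :=
          Real.exp_le_exp.mpr hexple
      _ = Real.exp ((k:ℝ)*R) * Real.exp (-(ε * Real.log N)) := by
          rw [← Real.exp_add]; ring_nf
      _ ≤ (D:ℝ) * (N:ℝ)^(-ε) := by
          rw [hNge]
          apply mul_le_mul_of_nonneg_right hDge (Real.exp_nonneg _)
  -- final chain
  show (B.card : ℝ) ≤ (D:ℝ) * (N:ℝ)^(-ε)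
  calc (B.card : ℝ) ≤ (((t+1) * (n.choose t)^2 : ℕ) : ℝ) := by exact_mod_cast hBcard
    _ = ((t:ℝ)+1) * ((n.choose t : ℕ):ℝ)^2 := by push_cast; ring
    _ ≤ ((t:ℝ)+1) * ((3/u)^t)^2 := by
        apply mul_le_mul_of_nonneg_left _ (by positivity)
        apply pow_le_pow_left₀ (by positivity) hC3u
    _ = Real.exp E := hexp1
    _ ≤ Real.exp ((3*c/4)*R*(n:ℝ) - R) := Real.exp_le_exp.mpr hEbound
    _ ≤ (D:ℝ) * (N:ℝ)^(-ε) := hfinal2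
end

section
/- Let n, k, m, s be natural numbers with m + s ≤ k. Let F₁, …, F_m be pairwise disjoint k-element subsets of {1,…,n} and let S be an s-element subset of {1,…,n} disjoint from each F_i. Let X be the number of k-element subsets E of {1,…,n} such that S ⊆ E and E ∩ F_i ≠ ∅ for every i = 1,…,m. Then k^m · C(n − m·k − s, k − m − s) ≤ X ≤ k^m · C(n, k − m), where C(·,·) denotes the binomial coefficient (interpreted as 0 when the lower index exceeds the upper index). -/
/-- Bounds on the number of `k`-sets `E` containing a fixed `s`-set `S` and
meeting each of `m` pairwise disjoint `k`-sets `F₁,…,F_m` (all disjoint from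
`S`): the count `X` satisfies
`k^m · C(n - mk - s, k - m - s) ≤ X ≤ k^m · C(n, k - m)`. -/
theorem stmt_13 (n k m s : ℕ) (hms : m + s ≤ k)
    (F : Fin m → Finset (Fin n)) (hFcard : ∀ i, (F i).card = k)
    (hFdisj : ∀ i j, i ≠ j → Disjoint (F i) (F j))
    (S : Finset (Fin n)) (hS : S.card = s) (hSF : ∀ i, Disjoint S (F i)) :
    k ^ m * (n - m * k - s).choose (k - m - s)
        ≤ (((Finset.univ : Finset (Fin n)).powersetCard k).filter
            (fun E => S ⊆ E ∧ ∀ i, (E ∩ F i).Nonempty)).card ∧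
      (((Finset.univ : Finset (Fin n)).powersetCard k).filter
          (fun E => S ⊆ E ∧ ∀ i, (E ∩ F i).Nonempty)).card
        ≤ k ^ m * n.choose (k - m) := by
  classical
  set B : Finset (Fin n) := Finset.univ.biUnion F with hB
  have hBmem : ∀ x, x ∈ B ↔ ∃ i, x ∈ F i := by
    intro x; simp [hB]
  have hBcard : B.card = m * k := by
    rw [hB, Finset.card_biUnion (fun i _ j _ hij => hFdisj i j hij)]
    simp [hFcard, Finset.sum_const, Finset.card_univ, mul_comm]
  have hSB : Disjoint S B := by
    rw [hB, Finset.disjoint_biUnion_right]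
    exact fun i _ => hSF i
  have hSBcard : (S ∪ B).card = s + m * k := by
    rw [Finset.card_union_of_disjoint hSB, hS, hBcard]
  set X := (((Finset.univ : Finset (Fin n)).powersetCard k).filter
      (fun E => S ⊆ E ∧ ∀ i, (E ∩ F i).Nonempty)) with hX
  constructor
  · -- lower bound
    set R : Finset (Fin n) := (S ∪ B)ᶜ with hR
    have hRcard : R.card = n - m * k - s := by
      rw [hR, Finset.card_compl, hSBcard, Fintype.card_fin]
      omega
    set D := (Fintype.piFinset F) ×ˢ (R.powersetCard (k - m - s)) with hD
    have hDcard : D.card = k ^ m * (n - m * k - s).choose (k - m - s) := by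
      rw [hD, Finset.card_product, Fintype.card_piFinset, Finset.card_powersetCard, hRcard]
      simp [hFcard, Finset.prod_const, Finset.card_univ]
    rw [← hDcard]
    apply Finset.card_le_card_of_injOn
      (fun p => S ∪ Finset.image p.1 Finset.univ ∪ p.2)
    · rintro ⟨f, T⟩ hp
      rw [Finset.mem_coe, hD, Finset.mem_product] at hp
      obtain ⟨hf, hT⟩ := hp
      rw [Fintype.mem_piFinset] at hf
      rw [Finset.mem_powersetCard] at hT
      obtain ⟨hTR, hTcard⟩ := hT
      have hfinj : Function.Injective f := by
        intro i j hij
        by_contra hne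
        have : f i ∈ F j := by rw [hij]; exact hf j
        exact Finset.disjoint_left.1 (hFdisj i j hne) (hf i) this
      have himg : (Finset.image f Finset.univ) ⊆ B := by
        intro x hx
        rw [Finset.mem_image] at hx
        obtain ⟨i, _, rfl⟩ := hx
        exact (hBmem (f i)).2 ⟨i, hf i⟩
      have hTdisj : Disjoint (S ∪ Finset.image f Finset.univ) T := by
        refine Finset.disjoint_left.2 fun x hx hxT => ?_
        have : x ∈ (S ∪ B)ᶜ := hTR hxT
        rw [Finset.mem_compl] at this
        apply this
        rcases Finset.mem_union.1 hx with h | h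
        · exact Finset.mem_union_left _ h
        · exact Finset.mem_union_right _ (himg h)
      have hSimg : Disjoint S (Finset.image f Finset.univ) :=
        hSB.mono_right himg
      have hcard : (S ∪ Finset.image f Finset.univ ∪ T).card = k := by
        rw [Finset.card_union_of_disjoint hTdisj, Finset.card_union_of_disjoint hSimg,
          Finset.card_image_of_injective _ hfinj, Finset.card_univ, Fintype.card_fin,
          hS, hTcard]
        omega
      simp only [Finset.mem_coe, hX, Finset.mem_filter, Finset.mem_powersetCard_univ]
      refine ⟨hcard, fun x hx => Finset.mem_union_left _ (Finset.mem_union_left _ hx),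
        fun i => ⟨f i, ?_⟩⟩
      exact Finset.mem_inter.2 ⟨Finset.mem_union_left _
        (Finset.mem_union_right _ (Finset.mem_image_of_mem f (Finset.mem_univ i))), hf i⟩
    · rintro ⟨f, T⟩ hp ⟨f', T'⟩ hp' heq
      rw [Finset.mem_coe, hD, Finset.mem_product] at hp hp'
      obtain ⟨hf, hT⟩ := hp
      obtain ⟨hf', hT'⟩ := hp'
      rw [Fintype.mem_piFinset] at hf hf'
      rw [Finset.mem_powersetCard] at hT hT'
      simp only at heq
      -- recover single elements
      have key : ∀ (g : Fin m → Fin n) (U : Finset (Fin n)), (∀ i, g i ∈ F i) →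
          U ⊆ R → ∀ i, (S ∪ Finset.image g Finset.univ ∪ U) ∩ F i = {g i} := by
        intro g U hg hU i
        ext x
        simp only [Finset.mem_inter, Finset.mem_union, Finset.mem_image, Finset.mem_univ,
          true_and, Finset.mem_singleton]
        constructor
        · rintro ⟨h1 | h2, hxF⟩
          · rcases h1 with h1 | ⟨j, rfl⟩
            · exact absurd hxF (Finset.disjoint_left.1 (hSF i) h1)
            · rcases eq_or_ne j i with rfl | hne
              · rfl
              · exact absurd hxF (Finset.disjoint_left.1 (hFdisj j i hne) (hg j))
          · have := hU h2
            rw [hR, Finset.mem_compl] at this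
            exact absurd (Finset.mem_union_right _ ((hBmem x).2 ⟨i, hxF⟩)) this
        · rintro rfl
          exact ⟨Or.inl (Or.inr ⟨i, rfl⟩), hg i⟩
      have hfeq : f = f' := by
        funext i
        have h1 := key f T hf hT.1 i
        have h2 := key f' T' hf' hT'.1 i
        rw [heq, h2] at h1
        exact Finset.singleton_injective h1.symm
      have hTrec : ∀ (g : Fin m → Fin n) (U : Finset (Fin n)), (∀ i, g i ∈ F i) →
          U ⊆ R → (S ∪ Finset.image g Finset.univ ∪ U) \ (S ∪ B) = U := by
        intro g U hg hU
        ext x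
        simp only [Finset.mem_sdiff, Finset.mem_union, Finset.mem_image, Finset.mem_univ,
          true_and]
        constructor
        · rintro ⟨h1 | h2, hnot⟩
          · rcases h1 with h1 | ⟨j, rfl⟩
            · exact absurd (Or.inl h1) hnot
            · exact absurd (Or.inr ((hBmem (g j)).2 ⟨j, hg j⟩)) hnot
          · exact h2
        · intro hx
          have hxR := hU hx
          rw [hR, Finset.mem_compl, Finset.mem_union] at hxR
          exact ⟨Or.inr hx, hxR⟩
      have hTeq : T = T' := by
        rw [← hTrec f T hf hT.1, ← hTrec f' T' hf' hT'.1, heq]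
      exact Prod.ext hfeq hTeq
  · -- upper bound
    set D := (Fintype.piFinset (fun i => Finset.image (fun x : Fin n => (x : WithTop (Fin n))) (F i)))
        ×ˢ ((Finset.univ : Finset (Fin n)).powersetCard (k - m)) with hD
    have hDcard : D.card = k ^ m * n.choose (k - m) := by
      rw [hD, Finset.card_product, Fintype.card_piFinset, Finset.card_powersetCard,
        Finset.card_univ, Fintype.card_fin]
      congr 1
      rw [Finset.prod_congr rfl (fun i _ =>
        (Finset.card_image_of_injective (F i) WithTop.coe_injective).trans (hFcard i))]
      simp
    rw [← hDcard]
    apply Finset.card_le_card_of_injOn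
      (fun E => (fun i => (E ∩ F i).min,
        E \ Finset.univ.filter (fun x : Fin n => ∃ i, (E ∩ F i).min = ↑x)))
    · intro E hE
      rw [Finset.mem_coe, hX, Finset.mem_filter, Finset.mem_powersetCard_univ] at hE
      obtain ⟨hEcard, hSE, hEF⟩ := hE
      set pick : Fin m → Fin n := fun i => (E ∩ F i).min' (hEF i) with hpick
      have hpickmin : ∀ i, (E ∩ F i).min = ↑(pick i) := fun i =>
        (Finset.coe_min' (hEF i)).symm
      have hpickmem : ∀ i, pick i ∈ E ∩ F i := fun i => Finset.min'_mem _ _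
      have hpickinj : Function.Injective pick := by
        intro i j hij
        by_contra hne
        have h1 : pick i ∈ F i := (Finset.mem_inter.1 (hpickmem i)).2
        have h2 : pick i ∈ F j := by rw [hij]; exact (Finset.mem_inter.1 (hpickmem j)).2
        exact Finset.disjoint_left.1 (hFdisj i j hne) h1 h2
      have hCeq : Finset.univ.filter (fun x : Fin n => ∃ i, (E ∩ F i).min = ↑x)
          = Finset.image pick Finset.univ := by
        ext x
        simp only [Finset.mem_filter, Finset.mem_univ, true_and, Finset.mem_image]
        constructor
        · rintro ⟨i, hi⟩
          refine ⟨i, ?_⟩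
          have h2 := (hpickmin i).symm.trans hi
          exact_mod_cast h2
        · rintro ⟨i, rfl⟩; exact ⟨i, hpickmin i⟩
      have hCsub : Finset.image pick Finset.univ ⊆ E := by
        intro x hx
        rw [Finset.mem_image] at hx
        obtain ⟨i, _, rfl⟩ := hx
        exact (Finset.mem_inter.1 (hpickmem i)).1
      have hCcard : (Finset.image pick Finset.univ).card = m := by
        rw [Finset.card_image_of_injective _ hpickinj, Finset.card_univ, Fintype.card_fin]
      rw [Finset.mem_coe, hD, Finset.mem_product]
      constructor
      · rw [Fintype.mem_piFinset]
        intro i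
        rw [Finset.mem_image]
        exact ⟨pick i, (Finset.mem_inter.1 (hpickmem i)).2, (hpickmin i).symm⟩

      · rw [Finset.mem_powersetCard_univ]; beta_reduce; rw [hCeq, Finset.card_sdiff_of_subset hCsub, hEcard, hCcard]
    · intro E hE E' hE' heq
      rw [Finset.mem_coe, hX, Finset.mem_filter, Finset.mem_powersetCard_univ] at hE hE'
      simp only [Prod.mk.injEq] at heq
      obtain ⟨hmin, hsd⟩ := heq
      have hCeq : Finset.univ.filter (fun x : Fin n => ∃ i, (E ∩ F i).min = ↑x)
          = Finset.univ.filter (fun x : Fin n => ∃ i, (E' ∩ F i).min = ↑x) := by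
        apply Finset.filter_congr
        intro x _
        simp only [funext_iff] at hmin
        constructor
        · rintro ⟨i, hi⟩; exact ⟨i, (hmin i) ▸ hi⟩
        · rintro ⟨i, hi⟩; exact ⟨i, (hmin i) ▸ hi⟩
      have hCsub : ∀ (G : Finset (Fin n)), (∀ i, (G ∩ F i).Nonempty) →
          Finset.univ.filter (fun x : Fin n => ∃ i, (G ∩ F i).min = ↑x) ⊆ G := by
        intro G hG x hx
        rw [Finset.mem_filter] at hx
        obtain ⟨_, i, hi⟩ := hx
        exact (Finset.mem_inter.1 (Finset.mem_of_min hi)).1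
      have h1 : E = (E \ Finset.univ.filter (fun x : Fin n => ∃ i, (E ∩ F i).min = ↑x))
          ∪ Finset.univ.filter (fun x : Fin n => ∃ i, (E ∩ F i).min = ↑x) :=
        (Finset.sdiff_union_of_subset (hCsub E hE.2.2)).symm
      have h2 : E' = (E' \ Finset.univ.filter (fun x : Fin n => ∃ i, (E' ∩ F i).min = ↑x))
          ∪ Finset.univ.filter (fun x : Fin n => ∃ i, (E' ∩ F i).min = ↑x) :=
        (Finset.sdiff_union_of_subset (hCsub E' hE'.2.2)).symm
      rw [h1, h2, hsd, hCeq]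
end
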